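/- Let Γ be a countable icc group and μ a probability measure on Γ whose support generates Γ. Let ζ : Γ → ℝ be non-negative, summable (ζ ∈ ℓ¹(Γ)), harmonic for the conjugation action (ζ(g) = Σ_s μ(s) ζ(s g s⁻¹) for all g), and satisfy ζ(e) = 0. Then ζ is identically zero. -/
import Mathlib


theorem stmt_6 {Γ : Type*} [Group Γ] [Countable Γ]
    (hicc : ∀ g : Γ, g ≠ 1 → {h : Γ | IsConj g h}.Infinite)
    (μ : Γ → ℝ)
    (hμnonneg : ∀ s, 0 ≤ μ s) (hμprob : HasSum μ 1)
    (hgen : Subgroup.closure {s | μ s ≠ 0} = ⊤)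
    (ζ : Γ → ℝ) (hζnonneg : ∀ g, 0 ≤ ζ g) (hζsum : Summable ζ)
    (hharm : ∀ g : Γ, HasSum (fun s => μ s * ζ (s * g * s⁻¹)) (ζ g))
    (hζe : ζ 1 = 0) :
    ζ = 0 := by
  classical
  by_contra hne
  -- there is g₀ with ζ g₀ > 0
  obtain ⟨g₀, hg₀⟩ : ∃ g, ζ g ≠ 0 := by
    by_contra h
    push_neg at h
    exact hne (funext fun g => h g)
  have hc : 0 < ζ g₀ := lt_of_le_of_ne (hζnonneg g₀) (Ne.symm hg₀)
  -- the set above threshold ζ g₀ is finite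
  have hfin : {g : Γ | ζ g₀ ≤ ζ g}.Finite := by
    have := hζsum.tendsto_cofinite_zero
    have h2 : ∀ᶠ g in Filter.cofinite, ζ g < ζ g₀ := by
      have := this.eventually (eventually_lt_nhds hc)
      simpa using this
    have := Filter.eventually_cofinite.mp h2
    convert this using 1
    ext g; simp [not_lt]
  have hne' : ({g : Γ | ζ g₀ ≤ ζ g}).Nonempty := ⟨g₀, by simp⟩
  -- pick maximizer
  obtain ⟨gm, hgmF, hgmmax⟩ := Set.exists_max_image _ ζ hfin hne'
  set M := ζ gm with hM
  have hMpos : 0 < M := lt_of_lt_of_le hc hgmF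
  have hmax : ∀ g, ζ g ≤ M := by
    intro g
    by_cases hg : ζ g₀ ≤ ζ g
    · exact hgmmax g hg
    · exact le_trans (le_of_not_ge hg) hgmF
  -- the set of maximizers
  set A := {g : Γ | ζ g = M} with hA
  have hAfin : A.Finite := hfin.subset (by intro g hg; simp only [hA, Set.mem_setOf_eq] at hg ⊢; rw [hg]; exact hgmF)
  have hAne : gm ∈ A := rfl
  -- key: conjugation by support elements preserves A
  have hkey : ∀ s : Γ, μ s ≠ 0 → ∀ g ∈ A, s * g * s⁻¹ ∈ A := by
    intro s hs g hg
    have hgM : ζ g = M := hg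
    have h1 : HasSum (fun t => μ t * ζ (t * g * t⁻¹)) M := hgM ▸ hharm g
    have h2 : HasSum (fun t => μ t * M) M := by
      simpa using hμprob.mul_right M
    have h3 : HasSum (fun t => μ t * M - μ t * ζ (t * g * t⁻¹)) 0 := by
      simpa using h2.sub h1
    have hnn : ∀ t, 0 ≤ μ t * M - μ t * ζ (t * g * t⁻¹) := by
      intro t
      have := mul_le_mul_of_nonneg_left (hmax (t * g * t⁻¹)) (hμnonneg t)
      linarith
    have hzero : ∀ t, μ t * M - μ t * ζ (t * g * t⁻¹) = 0 := by
      have := (hasSum_zero_iff_of_nonneg hnn).mp h3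
      intro t; exact congrFun this t
    have := hzero s
    have : μ s * ζ (s * g * s⁻¹) = μ s * M := by linarith
    exact mul_left_cancel₀ hs this
  -- the stabilizer-like set is a subgroup
  let S : Subgroup Γ :=
    { carrier := {s : Γ | ∀ g ∈ A, s * g * s⁻¹ ∈ A}
      one_mem' := by intro g hg; simpa using hg
      mul_mem' := by
        intro a b ha hb g hg
        have := ha (b * g * b⁻¹) (hb g hg)
        simpa [mul_assoc] using this
      inv_mem' := by
        intro a ha
        -- conj by a : A → A injective, A finite ⇒ surjective
        intro g hg
        have hmaps : ∀ x ∈ hAfin.toFinset, a * x * a⁻¹ ∈ hAfin.toFinset := by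
          intro x hx
          simp only [Set.Finite.mem_toFinset] at hx ⊢
          exact ha x hx
        have hinj : Function.Injective (fun x : Γ => a * x * a⁻¹) := by
          intro x y hxy
          simpa using hxy
        have himg : Finset.image (fun x => a * x * a⁻¹) hAfin.toFinset = hAfin.toFinset := by
          apply Finset.eq_of_subset_of_card_le
          · intro y hy
            simp only [Finset.mem_image] at hy
            obtain ⟨x, hx, rfl⟩ := hy
            exact hmaps x hx
          · rw [Finset.card_image_of_injective _ hinj]
        have hgmem : g ∈ Finset.image (fun x => a * x * a⁻¹) hAfin.toFinset := by
          rw [himg]; simpa using hg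
        simp only [Finset.mem_image] at hgmem
        obtain ⟨x, hx, hxg⟩ := hgmem
        simp only [Set.Finite.mem_toFinset] at hx
        have : a⁻¹ * g * a⁻¹⁻¹ = x := by
          rw [← hxg]; group
        rw [this]; exact hx }
  have hStop : S = ⊤ := by
    have h1 : Subgroup.closure {s | μ s ≠ 0} ≤ S := (Subgroup.closure_le S).mpr hkey
    rw [hgen] at h1
    exact top_le_iff.mp h1
  have hconjinv : ∀ s : Γ, ∀ g ∈ A, s * g * s⁻¹ ∈ A := by
    intro s
    have : s ∈ S := hStop ▸ Subgroup.mem_top s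
    exact this
  -- gm ≠ 1 since ζ 1 = 0 < M
  have hgm1 : gm ≠ 1 := by
    intro h
    rw [h, hζe] at hM
    exact hMpos.ne' hM
  have hsub : {h : Γ | IsConj gm h} ⊆ A := by
    intro h hh
    obtain ⟨c, hc'⟩ := isConj_iff.mp hh
    exact hc' ▸ hconjinv c gm hAne
  exact (hicc gm hgm1).mono hsub hAfin
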